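/- The monoid of delay words (Σ ∪ ℝ≥0)*/~ is isomorphic to the monoid TW of timed words with terminal delay, via the map d₀a₀d₁a₁...aₙdₙ₊₁ ↦ (a₀,d₀)(a₁,d₀+d₁)...(aₙ, d₀+⋯+dₙ)(d₀+⋯+dₙ₊₁). -/

import Mathlib

/-- Letters of the free monoid on Σ ∪ ℝ≥0: either a symbol or a delay. -/
abbrev DLetter (A : Type) := A ⊕ NNReal

/-- Generating relations of ~ : merging adjacent delays and removing zero delays. -/
inductive DWRel {A : Type} : List (DLetter A) → List (DLetter A) → Prop
  | merge (u v : List (DLetter A)) (d d' : NNReal) :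
      DWRel (u ++ [Sum.inr d, Sum.inr d'] ++ v) (u ++ [Sum.inr (d + d')] ++ v)
  | zero (u v : List (DLetter A)) :
      DWRel (u ++ [Sum.inr 0] ++ v) (u ++ v)

/-- The congruence ~ on (Σ ∪ ℝ≥0)*. -/
def DWEquiv {A : Type} : List (DLetter A) → List (DLetter A) → Prop :=
  Relation.EqvGen DWRel

/-- A timed word with terminal delay: a list of timestamped symbols together with
a final timestamp.  It is a proper timed word when the timestamps are increasing. -/
def IsTW {A : Type} (p : List (A × NNReal) × NNReal) : Prop :=
  List.Pairwise (· ≤ ·) (p.1.map Prod.snd ++ [p.2])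

/-- Concatenation of timed words: shift the second word by the terminal delay of the first. -/
def twConcat {A : Type} (p q : List (A × NNReal) × NNReal) :
    List (A × NNReal) × NNReal :=
  (p.1 ++ q.1.map (fun e => (e.1, e.2 + p.2)), p.2 + q.2)

/-- The map d₀a₀d₁a₁…aₙdₙ₊₁ ↦ (a₀,d₀)(a₁,d₀+d₁)…(aₙ,d₀+⋯+dₙ)(d₀+⋯+dₙ₊₁):
each symbol receives as timestamp the sum of delays preceding it, and the
terminal delay is the total sum of delays. -/
def toTW {A : Type} : List (DLetter A) → List (A × NNReal) × NNReal
  | [] => ([], 0)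
  | Sum.inl a :: w => ((a, 0) :: (toTW w).1, (toTW w).2)
  | Sum.inr d :: w => ((toTW w).1.map (fun p => (p.1, p.2 + d)), (toTW w).2 + d)

-- auxiliary lemmas
lemma toTW_append {A : Type} (u v : List (DLetter A)) :
    toTW (u ++ v) = twConcat (toTW u) (toTW v) := by
  induction u with
  | nil => simp [toTW, twConcat]
  | cons x u ih =>
    cases x with
    | inl a => simp [toTW, twConcat, ih]
    | inr d =>
      simp [toTW, twConcat, ih, List.map_map, Function.comp, add_assoc, add_comm, add_left_comm]

lemma isTW_toTW {A : Type} (w : List (DLetter A)) : IsTW (toTW w) := by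
  induction w with
  | nil => simp [IsTW, toTW]
  | cons x w ih =>
    cases x with
    | inl a =>
      simp only [IsTW, toTW] at ih ⊢
      simp only [List.map_cons, List.cons_append, List.pairwise_cons]
      exact ⟨fun b hb => (zero_le : 0 ≤ b), ih⟩
    | inr d =>
      simp only [IsTW, toTW] at ih ⊢
      have : ((toTW w).1.map (fun p => (p.1, p.2 + d))).map Prod.snd ++ [(toTW w).2 + d]
          = ((toTW w).1.map Prod.snd ++ [(toTW w).2]).map (fun x => x + d) := by
        simp [List.map_map, Function.comp]
      rw [this]
      exact List.Pairwise.map _ (fun a b h => add_le_add_left h d) ih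

lemma toTW_rel {A : Type} {u v : List (DLetter A)} (h : DWRel u v) : toTW u = toTW v := by
  cases h with
  | merge u v d d' =>
    rw [toTW_append, toTW_append, toTW_append, toTW_append]
    congr 1
    simp [toTW, add_comm, add_assoc, add_left_comm]
  | zero u v =>
    have h1 : toTW (u ++ [Sum.inr 0] ++ v) =
        twConcat (toTW u) (twConcat (toTW [Sum.inr (0:NNReal)]) (toTW v)) := by
      rw [List.append_assoc, toTW_append, toTW_append]
    rw [h1, toTW_append]
    simp [toTW, twConcat]

lemma dweq_cons {A : Type} (x : DLetter A) {u v : List (DLetter A)} (h : DWEquiv u v) :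
    DWEquiv (x :: u) (x :: v) := by
  induction h with
  | rel a b hab =>
    apply Relation.EqvGen.rel
    cases hab with
    | merge u v d d' =>
      have := DWRel.merge (A := A) (x :: u) v d d'
      simpa using this
    | zero u v =>
      have := DWRel.zero (A := A) (x :: u) v
      simpa using this
  | refl a => exact Relation.EqvGen.refl _
  | symm a b _ ih => exact Relation.EqvGen.symm _ _ ih
  | trans a b c _ _ ih1 ih2 => exact Relation.EqvGen.trans _ _ _ ih1 ih2

noncomputable def ofTW {A : Type} : List (A × NNReal) → NNReal → NNReal → List (DLetter A)
  | [], t, prev => [Sum.inr (t - prev)]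
  | (a, s) :: l, t, prev => Sum.inr (s - prev) :: Sum.inl a :: ofTW l t s

lemma toTW_ofTW {A : Type} (l : List (A × NNReal)) (t prev : NNReal)
    (h : List.Pairwise (· ≤ ·) (l.map Prod.snd ++ [t]))
    (hp : ∀ x ∈ l.map Prod.snd ++ [t], prev ≤ x) :
    toTW (ofTW l t prev) = (l.map (fun e => (e.1, e.2 - prev)), t - prev) := by
  induction l generalizing prev with
  | nil => simp [ofTW, toTW]
  | cons e l ih =>
    obtain ⟨a, s⟩ := e
    simp only [List.map_cons, List.cons_append, List.pairwise_cons] at h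
    have hps : prev ≤ s := hp s (by simp)
    have := ih s h.2 (fun x hx => h.1 x hx)
    simp only [ofTW, toTW, this, List.map_cons, List.map_map]
    refine Prod.ext ?_ ?_
    · simp only [List.cons.injEq]
      refine ⟨by simp, ?_⟩
      apply List.map_congr_left
      intro e he
      have hse : s ≤ e.2 := h.1 e.2 (List.mem_append_left _ (List.mem_map_of_mem (f := Prod.snd) he))
      simp [Function.comp, tsub_add_tsub_cancel hse hps]
    · have hst : s ≤ t := h.1 t (by simp)
      simp [tsub_add_tsub_cancel hst hps]

lemma ofTW_shift {A : Type} (l : List (A × NNReal)) (t prev d : NNReal) :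
    ofTW (l.map (fun e => (e.1, e.2 + d))) (t + d) (prev + d) = ofTW l t prev := by
  induction l generalizing prev with
  | nil => simp [ofTW, add_tsub_add_eq_tsub_right]
  | cons e l ih =>
    obtain ⟨a, s⟩ := e
    simp [ofTW, ih s, add_tsub_add_eq_tsub_right]

lemma dweq_norm {A : Type} (w : List (DLetter A)) :
    DWEquiv w (ofTW (toTW w).1 (toTW w).2 0) := by
  induction w with
  | nil =>
    apply Relation.EqvGen.symm
    apply Relation.EqvGen.rel
    have := DWRel.zero (A := A) [] []
    simpa [toTW, ofTW] using this
  | cons x w ih =>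
    cases x with
    | inl a =>
      refine Relation.EqvGen.trans _ _ _ (dweq_cons (Sum.inl a) ih) ?_
      apply Relation.EqvGen.symm
      apply Relation.EqvGen.rel
      have := DWRel.zero (A := A) [] (Sum.inl a :: ofTW (toTW w).1 (toTW w).2 0)
      simpa [toTW, ofTW] using this
    | inr d =>
      refine Relation.EqvGen.trans _ _ _ (dweq_cons (Sum.inr d) ih) ?_
      rcases hl : (toTW w).1 with _ | ⟨⟨a, s⟩, tl⟩
      · have := DWRel.merge (A := A) [] [] d ((toTW w).2 - 0)
        simp only [toTW, ofTW, hl, List.map_nil]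
        have h2 : (toTW w).2 + d - 0 = d + ((toTW w).2 - 0) := by
          simp [add_comm]
        rw [h2]
        apply Relation.EqvGen.rel
        simpa [ofTW] using this
      · simp only [toTW, ofTW, hl, List.map_cons]
        have h3 : ofTW (tl.map (fun e => (e.1, e.2 + d))) ((toTW w).2 + d) (s + d) =
            ofTW tl (toTW w).2 s := ofTW_shift tl (toTW w).2 s d
        rw [h3]
        have h4 : s + d - 0 = d + (s - 0) := by simp [add_comm]
        rw [h4]
        apply Relation.EqvGen.rel
        have := DWRel.merge (A := A) [] (Sum.inl a :: ofTW tl (toTW w).2 s) d (s - 0)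
        simpa [ofTW] using this

/-- The monoid of delay words (Σ ∪ ℝ≥0)*/~ is isomorphic to the monoid TW of timed
words with terminal delay, via toTW: the map is a monoid homomorphism (it sends the
empty word to the unit and concatenation to TW-concatenation), it lands in TW, it
is constant on ~-classes and separates them, and it is surjective onto TW. -/
theorem stmt1 (A : Type) :
    toTW (A := A) [] = ([], 0) ∧
    (∀ u v : List (DLetter A), toTW (u ++ v) = twConcat (toTW u) (toTW v)) ∧
    (∀ w : List (DLetter A), IsTW (toTW w)) ∧
    (∀ u v : List (DLetter A), DWEquiv u v ↔ toTW u = toTW v) ∧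
    (∀ p : List (A × NNReal) × NNReal, IsTW p → ∃ w : List (DLetter A), toTW w = p) := by
  refine ⟨rfl, toTW_append, isTW_toTW, ?_, ?_⟩
  · intro u v
    constructor
    · intro h
      induction h with
      | rel a b hab => exact toTW_rel hab
      | refl a => rfl
      | symm a b _ ih => exact ih.symm
      | trans a b c _ _ ih1 ih2 => exact ih1.trans ih2
    · intro h
      refine Relation.EqvGen.trans _ _ _ (dweq_norm u) ?_
      rw [h]
      exact Relation.EqvGen.symm _ _ (dweq_norm v)
  · intro p hp
    refine ⟨ofTW p.1 p.2 0, ?_⟩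
    rw [toTW_ofTW p.1 p.2 0 hp (fun x _ => (zero_le : 0 ≤ x))]
    simp
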